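/- For every n ≥ 1 and every k ≤ n, the number of b with 0 ≤ b < 2^n such that m(b,n) = k equals the binomial coefficient C(n,k). -/

import Mathlib

def T (N : ℕ) : ℕ := if N % 2 = 0 then N / 2 else (3 * N + 1) / 2

def m (b n : ℕ) : ℕ := ((Finset.range n).filter (fun k => Odd (T^[k] b))).card

lemma T_add (y d : ℕ) : T (y + 2 * d) = T y + (if y % 2 = 0 then d else 3 * d) := by
  unfold T
  split_ifs <;> omega

lemma m_succ (x n : ℕ) : m x (n + 1) = m x n + (if Odd (T^[n] x) then 1 else 0) := by
  unfold m
  rw [Finset.range_add_one, Finset.filter_insert]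
  by_cases h : Odd (T^[n] x)
  · rw [if_pos h, if_pos h, Finset.card_insert_of_notMem (by simp)]
  · rw [if_neg h, if_neg h, Nat.add_zero]

lemma T_iter_add (n x c : ℕ) : T^[n] (x + 2 ^ n * c) = T^[n] x + 3 ^ (m x n) * c := by
  induction n generalizing c with
  | zero => simp [m]
  | succ n ih =>
    have h1 : x + 2 ^ (n + 1) * c = x + 2 ^ n * (2 * c) := by ring
    rw [h1, Function.iterate_succ_apply', Function.iterate_succ_apply', ih]
    have h2 : T^[n] x + 3 ^ (m x n) * (2 * c) = T^[n] x + 2 * (3 ^ (m x n) * c) := by ring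
    rw [h2, T_add, m_succ]
    by_cases h : Odd (T^[n] x)
    · have ho := Nat.odd_iff.mp h
      rw [if_neg (by omega), if_pos h]
      ring
    · have ho : T^[n] x % 2 = 0 := by
        rw [Nat.odd_iff] at h; omega
      rw [if_pos ho, if_neg h]
      ring

lemma m_add (n x c : ℕ) : m (x + 2 ^ n * c) n = m x n := by
  induction n generalizing c with
  | zero => simp [m]
  | succ n ih =>
    have h1 : x + 2 ^ (n + 1) * c = x + 2 ^ n * (2 * c) := by ring
    rw [h1, m_succ, m_succ, ih, T_iter_add]
    have h2 : T^[n] x + 3 ^ (m x n) * (2 * c) = T^[n] x + 2 * (3 ^ (m x n) * c) := by ring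
    have h3 : Odd (T^[n] x + 3 ^ (m x n) * (2 * c)) ↔ Odd (T^[n] x) := by
      rw [h2, Nat.odd_iff, Nat.odd_iff]; omega
    simp only [h3]

lemma parity_flip (n a : ℕ) : Odd (T^[n] (a + 2 ^ n)) ↔ ¬ Odd (T^[n] a) := by
  have h := T_iter_add n a 1
  rw [mul_one, mul_one] at h
  have h3 : 3 ^ (m a n) % 2 = 1 := Nat.odd_iff.mp (Odd.pow ⟨1, by norm_num⟩)
  rw [h, Nat.odd_iff, Nat.odd_iff]
  omega

lemma count_eq (n k : ℕ) :
    ((Finset.range (2 ^ n)).filter (fun b => m b n = k)).card = Nat.choose n k := by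
  induction n generalizing k with
  | zero =>
    cases k <;> simp [m]
  | succ n ih =>
    have hr : Finset.range (2 ^ (n + 1)) =
        Finset.range (2 ^ n) ∪ (Finset.range (2 ^ n)).image (· + 2 ^ n) := by
      ext b
      simp only [Finset.mem_range, Finset.mem_union, Finset.mem_image, pow_succ]
      constructor
      · intro hb
        rcases lt_or_ge b (2 ^ n) with h | h
        · exact Or.inl h
        · exact Or.inr ⟨b - 2 ^ n, by omega, by omega⟩
      · rintro (h | ⟨a, ha, rfl⟩) <;> nlinarith [pow_pos (by norm_num : (0:ℕ) < 2) n]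
    have hdisj : Disjoint (Finset.range (2 ^ n))
        ((Finset.range (2 ^ n)).image (· + 2 ^ n)) := by
      rw [Finset.disjoint_left]
      rintro b hb hb'
      simp only [Finset.mem_range] at hb
      simp only [Finset.mem_image, Finset.mem_range] at hb'
      obtain ⟨a, _, rfl⟩ := hb'
      omega
    rw [Finset.card_filter, hr, Finset.sum_union hdisj, Finset.sum_image
      (by intro a _ b _ h; simp only at h; omega)]
    rw [← Finset.sum_add_distrib]
    have key : ∀ a ∈ Finset.range (2 ^ n),
        ((if m a (n + 1) = k then 1 else 0) + (if m (a + 2 ^ n) (n + 1) = k then 1 else 0) : ℕ)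
        = (if m a n = k then 1 else 0) + (if m a n + 1 = k then 1 else 0) := by
      intro a _
      have hm : m (a + 2 ^ n) n = m a n := by
        have := m_add n a 1; rwa [mul_one] at this
      rw [m_succ, m_succ, hm]
      by_cases h : Odd (T^[n] a)
      · have h2 : ¬ Odd (T^[n] (a + 2 ^ n)) := by
          rw [parity_flip]; exact not_not_intro h
        rw [if_pos h, if_neg h2, Nat.add_zero]
        exact add_comm _ _
      · have h2 : Odd (T^[n] (a + 2 ^ n)) := (parity_flip n a).mpr h
        rw [if_neg h, if_pos h2, Nat.add_zero]
    rw [Finset.sum_congr rfl key, Finset.sum_add_distrib,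
      ← Finset.card_filter, ← Finset.card_filter, ih]
    cases k with
    | zero =>
      have h0 : ((Finset.range (2 ^ n)).filter (fun a => m a n + 1 = 0)).card = 0 := by
        simp
      rw [h0]
      simp
    | succ j =>
      rw [Finset.filter_congr (fun a _ => by omega :
        ∀ a ∈ Finset.range (2 ^ n), m a n + 1 = j + 1 ↔ m a n = j), ih, Nat.choose_succ_succ]
      simp only [Nat.succ_eq_add_one]
      omega

theorem stmt12 : ∀ n ≥ 1, ∀ k ≤ n,
    ((Finset.range (2 ^ n)).filter (fun b => m b n = k)).card = Nat.choose n k := by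
  intro n _ k _
  exact count_eq n k
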